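/- Let η, η₁, …, ηₘ : X → ℝ all be differentiable at every point of s with (Lη)(x) + q(x)·η(x) = 0 and (Lηⱼ)(x) + q(x)·ηⱼ(x) = 0 for all x ∈ s and all j, and suppose η is nonvanishing on s. Then for every differentiable function f : ℝᵐ → ℝ, the function ψ(x) = η(x) · f(η₁(x)/η(x), …, ηₘ(x)/η(x)) satisfies (Lψ)(x) + q(x)·ψ(x) = 0 for all x ∈ s. -/

import Mathlib

/-- If η, η₁, …, ηₘ all solve (L+q)·=0 on s and η is nonvanishing,
then ψ = η·f(η₁/η, …, ηₘ/η) solves (L+q)ψ = 0 on s. -/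
theorem solution_from_ratios
    {X : Type*} [NormedAddCommGroup X] [NormedSpace ℝ X]
    (s : Set X) (hs : IsOpen s) (a : X → X) (q : X → ℝ) (η : X → ℝ)
    (hηd : ∀ x ∈ s, DifferentiableAt ℝ η x)
    (hη0 : ∀ x ∈ s, η x ≠ 0)
    (hηeq : ∀ x ∈ s, fderiv ℝ η x (a x) + q x * η x = 0)
    (m : ℕ) (ηs : Fin m → X → ℝ)
    (hηsd : ∀ j, ∀ x ∈ s, DifferentiableAt ℝ (ηs j) x)
    (hηseq : ∀ j, ∀ x ∈ s, fderiv ℝ (ηs j) x (a x) + q x * ηs j x = 0)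
    (f : (Fin m → ℝ) → ℝ) (hf : Differentiable ℝ f) :
    ∀ x ∈ s,
      fderiv ℝ (fun y => η y * f (fun j => ηs j y / η y)) x (a x)
          + q x * (η x * f (fun j => ηs j x / η x)) = 0 := by
  intro x hx
  set g : X → Fin m → ℝ := fun y j => ηs j y / η y with hg
  have hηa : fderiv ℝ η x (a x) = -(q x * η x) :=
    eq_neg_of_add_eq_zero_left (hηeq x hx)
  -- derivative of 1/η
  have hinv : HasFDerivAt (fun y => (η y)⁻¹)
      ((ContinuousLinearMap.smulRight (1 : ℝ →L[ℝ] ℝ) (-(η x ^ 2)⁻¹)).comp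
        (fderiv ℝ η x)) x :=
    (hasFDerivAt_inv (hη0 x hx)).comp x (hηd x hx).hasFDerivAt
  -- each ratio has vanishing derivative along a x
  have hratio : ∀ j, HasFDerivAt (fun y => ηs j y / η y)
      (ηs j x • ((ContinuousLinearMap.smulRight (1 : ℝ →L[ℝ] ℝ) (-(η x ^ 2)⁻¹)).comp
        (fderiv ℝ η x)) + (η x)⁻¹ • fderiv ℝ (ηs j) x) x := by
    intro j
    have := (hηsd j x hx).hasFDerivAt.fun_mul hinv
    simpa [div_eq_mul_inv] using this
  have hgdj : ∀ j, DifferentiableAt ℝ (fun y => ηs j y / η y) x :=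
    fun j => (hratio j).differentiableAt
  have hgd : DifferentiableAt ℝ g x := differentiableAt_pi.2 hgdj
  have hfg : DifferentiableAt ℝ (fun y => f (g y)) x := (hf (g x)).comp x hgd
  have hga : fderiv ℝ g x (a x) = 0 := by
    rw [hg, fderiv_pi hgdj]
    funext j
    have hηja : fderiv ℝ (ηs j) x (a x) = -(q x * ηs j x) :=
      eq_neg_of_add_eq_zero_left (hηseq j x hx)
    have hv : fderiv ℝ (fun y => ηs j y / η y) x = _ := (hratio j).fderiv
    simp only [ContinuousLinearMap.pi_apply, hv, ContinuousLinearMap.add_apply,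
      ContinuousLinearMap.smul_apply, ContinuousLinearMap.comp_apply,
      ContinuousLinearMap.smulRight_apply, ContinuousLinearMap.one_apply,
      smul_eq_mul, hηa, hηja, Pi.zero_apply]
    have h0 := hη0 x hx
    field_simp
    ring
  have hcomp : fderiv ℝ (fun y => f (g y)) x (a x) = 0 := by
    rw [show (fun y => f (g y)) = f ∘ g from rfl, fderiv_comp x (hf (g x)) hgd]
    simp [hga]
  have hmul := fderiv_fun_mul (𝕜 := ℝ) (hηd x hx) hfg
  have hval : fderiv ℝ (fun y => η y * f (g y)) x (a x)
      = η x * fderiv ℝ (fun y => f (g y)) x (a x)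
        + f (g x) * fderiv ℝ η x (a x) := by
    rw [hmul]; simp [mul_comm]
  rw [show (fun y => η y * f (fun j => ηs j y / η y)) = fun y => η y * f (g y) from rfl,
    hval, hcomp, hηa]
  ring
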